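/- Let c > 0 be a real number and define f : (0,∞) → ℝ by f(v) = log v + Σ_{n=1}^∞ v^n/(n·n!). Define F : (0,∞) → ℝ by F(x) = (x + c)·exp(−x c/(x + c)) − e^{−c}·c²·f(c²/(x + c)). Then for every x > 0, F is differentiable at x with derivative F′(x) = exp(−x c/(x + c)). In other words, F is an antiderivative of x ↦ exp(−x c/(x + c)) on (0,∞). -/

import Mathlib

open Real

lemma exp_tsum (u : ℝ) : Real.exp u = ∑' n : ℕ, u ^ n / n.factorial := by
  rw [Real.exp_eq_exp_ℝ, NormedSpace.exp_eq_tsum_div]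

lemma tsum_deriv_aux (u : ℝ) (hu : 0 < u) :
    HasDerivAt (fun v : ℝ => ∑' n : ℕ, v ^ (n + 1) / ((n + 1) * Nat.factorial (n + 1) : ℝ))
      ((Real.exp u - 1) / u) u := by
  set R : ℝ := u + 1 with hR
  have hRpos : 0 < R := by positivity
  have key : HasDerivAt (fun v : ℝ => ∑' n : ℕ, v ^ (n + 1) / ((n + 1) * Nat.factorial (n + 1) : ℝ))
      (∑' n : ℕ, u ^ n / (Nat.factorial (n + 1) : ℝ)) u := by
    apply hasDerivAt_tsum_of_isPreconnected
      (u := fun n : ℕ => R ^ n / (Nat.factorial (n + 1) : ℝ))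
      (g' := fun (n : ℕ) (y : ℝ) => y ^ n / (Nat.factorial (n + 1) : ℝ))
      (t := Set.Ioo (-R) R) (y₀ := 0)
    · refine Summable.of_nonneg_of_le (fun n => by positivity) (fun n => ?_)
        (Real.summable_pow_div_factorial R)
      gcongr
      exact Nat.le_succ n
    · exact isOpen_Ioo
    · exact (convex_Ioo _ _).isPreconnected
    · intro n y _
      have h := ((hasDerivAt_pow (n + 1) y).div_const ((n + 1) * Nat.factorial (n + 1) : ℝ))
      refine h.congr_deriv ?_
      have h1 : ((n : ℝ) + 1) ≠ 0 := by positivity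
      have h2 : ((Nat.factorial (n + 1) : ℝ)) ≠ 0 := by
        exact_mod_cast (Nat.factorial_pos (n+1)).ne'
      push_cast
      field_simp
    · intro n y hy
      have hyR : |y| ≤ R := by
        rw [abs_le]
        exact ⟨hy.1.le, hy.2.le⟩
      rw [Real.norm_eq_abs, abs_div, abs_pow]
      rw [Nat.abs_cast]
      gcongr
    · constructor <;> [linarith; linarith]
    · apply Summable.congr summable_zero
      intro n
      simp
    · constructor <;> [linarith; linarith]
  convert key using 1
  have hs : Summable fun n : ℕ => u ^ n / (Nat.factorial n : ℝ) :=
    Real.summable_pow_div_factorial u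
  have hexp : Real.exp u = 1 + ∑' n : ℕ, u ^ (n + 1) / (Nat.factorial (n + 1) : ℝ) := by
    rw [exp_tsum u, hs.tsum_eq_zero_add]
    simp
  have hmul : u * ∑' n : ℕ, u ^ n / (Nat.factorial (n + 1) : ℝ)
      = ∑' n : ℕ, u ^ (n + 1) / (Nat.factorial (n + 1) : ℝ) := by
    rw [← tsum_mul_left]
    congr 1
    ext n
    rw [pow_succ]
    ring
  field_simp
  rw [hmul]
  linarith [hexp]

/-- Let `c > 0` and `f(v) = log v + Σ_{n≥1} vⁿ/(n·n!)`. Then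
`F(x) = (x + c)·exp(−xc/(x+c)) − e^{−c}·c²·f(c²/(x+c))` is an antiderivative of
`x ↦ exp(−xc/(x+c))` on `(0,∞)`. -/
theorem antideriv_F (c : ℝ) (hc : 0 < c) (x : ℝ) (hx : 0 < x) :
    HasDerivAt
      (fun y : ℝ => (y + c) * Real.exp (-y * c / (y + c)) -
        Real.exp (-c) * c ^ 2 *
          (Real.log (c ^ 2 / (y + c)) +
            ∑' n : ℕ, (c ^ 2 / (y + c)) ^ (n + 1) / ((n + 1) * Nat.factorial (n + 1) : ℝ)))
      (Real.exp (-x * c / (x + c))) x := by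
  have hs : 0 < x + c := by linarith
  have hs0 : x + c ≠ 0 := hs.ne'
  have hu : 0 < c ^ 2 / (x + c) := by positivity
  set u : ℝ := c ^ 2 / (x + c) with hudef
  -- derivative of y ↦ c^2/(y+c)
  have h1 : HasDerivAt (fun y : ℝ => c ^ 2 / (y + c)) (-c ^ 2 / (x + c) ^ 2) x := by
    have := (hasDerivAt_const x (c ^ 2)).div ((hasDerivAt_id x).add_const c) hs0
    refine this.congr_deriv ?_
    simp only [id_eq]
    ring
  -- derivative of inner exponent
  have h2 : HasDerivAt (fun y : ℝ => -y * c / (y + c)) (-c ^ 2 / (x + c) ^ 2) x := by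
    have hnum : HasDerivAt (fun y : ℝ => -y * c) (-c) x := by
      simpa using ((hasDerivAt_id x).neg.mul_const c)
    have := hnum.div ((hasDerivAt_id x).add_const c) hs0
    refine this.congr_deriv ?_
    simp only [id_eq]
    field_simp
    ring
  have hexp : HasDerivAt (fun y : ℝ => Real.exp (-y * c / (y + c)))
      (Real.exp (-x * c / (x + c)) * (-c ^ 2 / (x + c) ^ 2)) x := h2.exp
  have hfirst : HasDerivAt (fun y : ℝ => (y + c) * Real.exp (-y * c / (y + c)))
      (Real.exp (-x * c / (x + c)) +
        (x + c) * (Real.exp (-x * c / (x + c)) * (-c ^ 2 / (x + c) ^ 2))) x := by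
    have := ((hasDerivAt_id x).add_const c).mul hexp
    refine this.congr_deriv ?_
    simp only [id_eq]
    ring
  have hlog : HasDerivAt (fun y : ℝ => Real.log (c ^ 2 / (y + c)))
      ((-c ^ 2 / (x + c) ^ 2) / u) x := by
    simpa using h1.log hu.ne'
  have hS : HasDerivAt
      (fun y : ℝ => ∑' n : ℕ, (c ^ 2 / (y + c)) ^ (n + 1) / ((n + 1) * Nat.factorial (n + 1) : ℝ))
      (((Real.exp u - 1) / u) * (-c ^ 2 / (x + c) ^ 2)) x :=
    by have := (tsum_deriv_aux u hu).comp x h1; exact this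
  have hsecond := ((hlog.add hS).const_mul (Real.exp (-c) * c ^ 2))
  have htotal := hfirst.sub hsecond
  refine htotal.congr_deriv ?_
  -- now the algebraic identity
  have hEc : Real.exp (-x * c / (x + c)) = Real.exp (-c) * Real.exp (c ^ 2 / (x + c)) := by
    rw [← Real.exp_add]
    congr 1
    field_simp
    ring
  rw [hEc, hudef]
  have hc2 : (c : ℝ) ^ 2 ≠ 0 := by positivity
  field_simp
  ring
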